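/- For every symmetric real-valued function ω on unordered pairs of distinct elements of {1,2,3,4,5}, there exists a permutation σ of {1,2,3,4,5} belonging to the dihedral group of the 5-cycle 1-2-3-4-5 (i.e., σ maps cyclically adjacent labels to cyclically adjacent labels) such that ω(σ(3),σ(5)) ≥ ω(σ(2),σ(4)) and ω(σ(2),σ(5)) ≥ ω(σ(1),σ(3)). -/

import Mathlib

/-- **Relabeling lemma (Lemma 6).** The pentagon vertices `1,…,5` are indexed by `Fin 5`
as `0,…,4`, cyclically adjacent labels differing by `±1` modulo `5`. For every symmetric
real function `w` on pairs of labels there is a permutation `σ` preserving cyclic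
adjacency (i.e. a member of the dihedral group of the 5-cycle) such that
`w (σ3) (σ5) ≥ w (σ2) (σ4)` and `w (σ2) (σ5) ≥ w (σ1) (σ3)`. -/
theorem pentagon_relabeling
    (w : Fin 5 → Fin 5 → ℝ) (hsym : ∀ i j, w i j = w j i) :
    ∃ σ : Equiv.Perm (Fin 5),
      (∀ i : Fin 5, σ (i + 1) = σ i + 1 ∨ σ (i + 1) = σ i - 1) ∧
      w (σ 1) (σ 3) ≤ w (σ 2) (σ 4) ∧
      w (σ 0) (σ 2) ≤ w (σ 1) (σ 4) := by
  obtain ⟨m, hm⟩ := Finite.exists_max (fun i : Fin 5 => w i (i + 2))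
  rcases le_total (w (m - 2) m) (w (m + 2) (m - 1)) with h | h
  · -- rotation σ i = i + (m - 2)
    refine ⟨Equiv.addRight (m - 2), ?_, ?_, ?_⟩
    · intro i
      left
      simp only [Equiv.coe_addRight]
      abel
    · simp only [Equiv.coe_addRight]
      have a1 : ∀ x : Fin 5, (1 : Fin 5) + (x - 2) = x - 1 := by decide
      have a3 : ∀ x : Fin 5, (3 : Fin 5) + (x - 2) = (x - 1) + 2 := by decide
      have a2 : ∀ x : Fin 5, (2 : Fin 5) + (x - 2) = x := by decide
      have a4 : ∀ x : Fin 5, (4 : Fin 5) + (x - 2) = x + 2 := by decide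
      rw [a1, a3, a2, a4]
      exact hm (m - 1)
    · simp only [Equiv.coe_addRight]
      have a0 : ∀ x : Fin 5, (0 : Fin 5) + (x - 2) = x - 2 := by decide
      have a2 : ∀ x : Fin 5, (2 : Fin 5) + (x - 2) = x := by decide
      have a1 : ∀ x : Fin 5, (1 : Fin 5) + (x - 2) = x - 1 := by decide
      have a4 : ∀ x : Fin 5, (4 : Fin 5) + (x - 2) = x + 2 := by decide
      rw [a0, a2, a1, a4, hsym (m - 1) (m + 2)]
      exact h
  · -- reflection σ i = (m - 1) - i
    refine ⟨Function.Involutive.toPerm (fun i => m - 1 - i) (fun i => sub_sub_cancel _ _), ?_, ?_, ?_⟩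
    · intro i
      right
      dsimp only [Function.Involutive.toPerm, Equiv.coe_fn_mk]
      abel
    · dsimp only [Function.Involutive.toPerm, Equiv.coe_fn_mk]
      have a1 : ∀ x : Fin 5, x - 1 - 1 = x - 2 := by decide
      have a3 : ∀ x : Fin 5, x - 1 - 3 = x + 1 := by decide
      have a2 : ∀ x : Fin 5, x - 1 - 2 = x + 2 := by decide
      have a4 : ∀ x : Fin 5, x - 1 - 4 = x := by decide
      rw [a1, a3, a2, a4, hsym (m - 2) (m + 1), hsym (m + 2) m]
      have key := hm (m + 1)
      have e : ∀ x : Fin 5, x + 1 + 2 = x - 2 := by decide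
      rw [e] at key
      exact key
    · dsimp only [Function.Involutive.toPerm, Equiv.coe_fn_mk]
      have a0 : ∀ x : Fin 5, x - 1 - 0 = x - 1 := by decide
      have a2 : ∀ x : Fin 5, x - 1 - 2 = x + 2 := by decide
      have a1 : ∀ x : Fin 5, x - 1 - 1 = x - 2 := by decide
      have a4 : ∀ x : Fin 5, x - 1 - 4 = x := by decide
      rw [a0, a2, a1, a4, hsym (m - 1) (m + 2)]
      exact h
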